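/- Let f ∈ Diff_0([0,1]) and let x₀ ∈ (0,1) satisfy f(x₀) > x₀. Suppose that the function v(x) = f(x) − x is non-increasing on [x₀, 1]. Set δ_n = f^{n+1}(x₀) − f^{n}(x₀). Then δ_n ≤ 1/n for every n ≥ 1, and consequently Γ_n(f) ≥ δ₀·n for every n ≥ 1. -/

import Mathlib

/-- `IsDiff0 f g` says that `f` is an orientation-preserving `C¹` diffeomorphism of the
interval `[0,1]` fixing the endpoints, with inverse `g`. -/
structure IsDiff0 (f g : ℝ → ℝ) : Prop where
  mapsTo : Set.MapsTo f (Set.Icc 0 1) (Set.Icc 0 1)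
  mapsTo_inv : Set.MapsTo g (Set.Icc 0 1) (Set.Icc 0 1)
  left_inv : ∀ x ∈ Set.Icc (0:ℝ) 1, g (f x) = x
  right_inv : ∀ x ∈ Set.Icc (0:ℝ) 1, f (g x) = x
  map_zero : f 0 = 0
  map_one : f 1 = 1
  contDiffOn : ContDiffOn ℝ 1 f (Set.Icc 0 1)
  contDiffOn_inv : ContDiffOn ℝ 1 g (Set.Icc 0 1)
  deriv_pos : ∀ x ∈ Set.Icc (0:ℝ) 1, 0 < derivWithin f (Set.Icc 0 1) x

/-- The growth sequence `Γ_n(f) = max (sup_x (fⁿ)'(x), sup_x (f⁻ⁿ)'(x))`, where `g = f⁻¹`. -/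
noncomputable def Gamma (f g : ℝ → ℝ) (n : ℕ) : ℝ :=
  max (⨆ x : Set.Icc (0:ℝ) 1, derivWithin (f^[n]) (Set.Icc 0 1) (x : ℝ))
      (⨆ x : Set.Icc (0:ℝ) 1, derivWithin (g^[n]) (Set.Icc 0 1) (x : ℝ))

/-- If `v(x) = f(x) - x` is non-increasing on `[x₀, 1]` and `f(x₀) > x₀`, then
`δ_n = f^{n+1}(x₀) - f^n(x₀) ≤ 1/n` and `Γ_n(f) ≥ δ₀ · n` for all `n ≥ 1`. -/
theorem linear_growth_of_monotone_displacement (f g : ℝ → ℝ) (hf : IsDiff0 f g)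
    (x₀ : ℝ) (hx₀ : x₀ ∈ Set.Ioo (0:ℝ) 1) (hfx₀ : f x₀ > x₀)
    (hv : ∀ x ∈ Set.Icc x₀ 1, ∀ y ∈ Set.Icc x₀ 1, x ≤ y → f y - y ≤ f x - x) :
    ∀ n : ℕ, 1 ≤ n →
      f^[n+1] x₀ - f^[n] x₀ ≤ 1 / (n : ℝ) ∧
      (f x₀ - x₀) * (n : ℝ) ≤ Gamma f g n := by
  obtain ⟨hx₀0, hx₀1⟩ := hx₀
  set s : Set ℝ := Set.Icc (0:ℝ) 1 with hs
  have hx₀s : x₀ ∈ s := ⟨hx₀0.le, hx₀1.le⟩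
  -- f is strictly monotone on s
  have hfmono : StrictMonoOn f s := by
    apply strictMonoOn_of_deriv_pos (convex_Icc 0 1) hf.contDiffOn.continuousOn
    intro x hx
    rw [interior_Icc] at hx
    have hmem : s ∈ nhds x := Icc_mem_nhds hx.1 hx.2
    have := hf.deriv_pos x ⟨hx.1.le, hx.2.le⟩
    rwa [derivWithin_of_mem_nhds hmem] at this
  -- the orbit stays in s
  have horb : ∀ n, f^[n] x₀ ∈ s := by
    intro n; induction n with
    | zero => simpa using hx₀s
    | succ n ih => rw [Function.iterate_succ_apply']; exact hf.mapsTo ih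
  have hstep : ∀ n, f^[n] x₀ < f^[n+1] x₀ := by
    intro n; induction n with
    | zero => simpa using hfx₀
    | succ n ih =>
      have h := hfmono (horb n) (horb (n+1)) ih
      rwa [← Function.iterate_succ_apply' f n, ← Function.iterate_succ_apply' f (n+1)] at h
  have hmono : Monotone (fun n => f^[n] x₀) :=
    monotone_nat_of_le_succ (fun k => (hstep k).le)
  have hx₀le : ∀ n, x₀ ≤ f^[n] x₀ := fun n => by
    simpa using hmono (Nat.zero_le n)
  have horb' : ∀ n, f^[n] x₀ ∈ Set.Icc x₀ 1 := fun n => ⟨hx₀le n, (horb n).2⟩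
  -- δ is non-increasing
  have hd : ∀ {m n : ℕ}, m ≤ n → f^[n+1] x₀ - f^[n] x₀ ≤ f^[m+1] x₀ - f^[m] x₀ := by
    intro m n h
    have := hv _ (horb' m) _ (horb' n) (hmono h)
    simpa [Function.iterate_succ_apply'] using this
  -- n · δₙ ≤ 1
  have hsum : ∀ n : ℕ, (n : ℝ) * (f^[n+1] x₀ - f^[n] x₀) ≤ 1 := by
    intro n
    have h1 : ∀ k ∈ Finset.range n, f^[n+1] x₀ - f^[n] x₀ ≤ f^[k+1] x₀ - f^[k] x₀ :=
      fun k hk => hd (Finset.mem_range.mp hk).le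
    calc (n : ℝ) * (f^[n+1] x₀ - f^[n] x₀)
        = ∑ _k ∈ Finset.range n, (f^[n+1] x₀ - f^[n] x₀) := by
          simp [Finset.sum_const, nsmul_eq_mul, mul_sub]
      _ ≤ ∑ k ∈ Finset.range n, (f^[k+1] x₀ - f^[k] x₀) := Finset.sum_le_sum h1
      _ = f^[n] x₀ - f^[0] x₀ := Finset.sum_range_sub (fun k => f^[k] x₀) n
      _ ≤ 1 := by
          have h2 := (horb n).2
          simp only [Function.iterate_zero_apply]
          linarith
  -- iterates of f stay in s for any starting point in s
  have hit : ∀ y ∈ s, ∀ n, f^[n] y ∈ s := by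
    intro y hy n; induction n with
    | zero => simpa using hy
    | succ n ih => rw [Function.iterate_succ_apply']; exact hf.mapsTo ih
  -- g^[n] inverts f^[n] on s
  have hginv : ∀ y ∈ s, ∀ n, g^[n] (f^[n] y) = y := by
    intro y hy n; induction n with
    | zero => simp
    | succ n ih =>
      rw [Function.iterate_succ_apply g, Function.iterate_succ_apply' f,
        hf.left_inv _ (hit y hy n), ih]
  -- smoothness of g^[n]
  have hgC : ∀ n, ContDiffOn ℝ 1 (g^[n]) s := by
    intro n; induction n with
    | zero => simpa using contDiffOn_id
    | succ n ih =>
      rw [Function.iterate_succ]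
      exact ih.comp hf.contDiffOn_inv hf.mapsTo_inv
  intro n hn
  have hnpos : (0:ℝ) < n := by exact_mod_cast hn
  set a := f^[n] x₀ with ha
  set b := f^[n+1] x₀ with hb
  have hab : a < b := hstep n
  have ha0 : 0 < a := lt_of_lt_of_le hx₀0 (hx₀le n)
  have hb1 : b ≤ 1 := (horb (n+1)).2
  have hpart1 : b - a ≤ 1 / (n : ℝ) := by
    rw [le_div_iff₀ hnpos]
    have := hsum n
    linarith [hsum n]
  refine ⟨hpart1, ?_⟩
  -- Mean value theorem for g^[n] on [a, b]
  have hsub : Set.Icc a b ⊆ s := Set.Icc_subset_Icc ha0.le hb1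
  have hcont : ContinuousOn (g^[n]) (Set.Icc a b) := (hgC n).continuousOn.mono hsub
  have hdiff : DifferentiableOn ℝ (g^[n]) (Set.Ioo a b) := by
    intro x hx
    have hmem : s ∈ nhds x := Icc_mem_nhds (lt_trans ha0 hx.1) (lt_of_lt_of_le hx.2 hb1)
    exact (((hgC n).differentiableOn one_ne_zero x (hsub (Set.Ioo_subset_Icc_self hx))).differentiableAt
      hmem).differentiableWithinAt
  obtain ⟨c, hc, hderiv⟩ := exists_deriv_eq_slope (g^[n]) hab hcont hdiff
  have hcs : c ∈ s := hsub (Set.Ioo_subset_Icc_self hc)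
  have hcnhds : s ∈ nhds c := Icc_mem_nhds (lt_trans ha0 hc.1) (lt_of_lt_of_le hc.2 hb1)
  have hga : g^[n] a = x₀ := hginv x₀ hx₀s n
  have hgb : g^[n] b = f x₀ := by
    have : b = f^[n] (f x₀) := by rw [hb, Function.iterate_succ_apply]
    rw [this, hginv (f x₀) (hf.mapsTo hx₀s) n]
  have hδ0pos : 0 < f x₀ - x₀ := sub_pos.mpr hfx₀
  have habpos : 0 < b - a := sub_pos.mpr hab
  have hkey : (f x₀ - x₀) * (n : ℝ) ≤ derivWithin (g^[n]) s c := by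
    rw [derivWithin_of_mem_nhds hcnhds, hderiv, hga, hgb]
    have h1 : (n:ℝ) ≤ 1/(b-a) := by rw [le_div_iff₀ habpos]; nlinarith [hsum n]
    calc (f x₀ - x₀) * (n:ℝ) ≤ (f x₀ - x₀) * (1/(b-a)) :=
          mul_le_mul_of_nonneg_left h1 hδ0pos.le
      _ = (f x₀ - x₀)/(b-a) := by ring
  -- bound the supremum
  have hcd : ContinuousOn (derivWithin (g^[n]) s) s :=
    (hgC n).continuousOn_derivWithin (uniqueDiffOn_Icc zero_lt_one) le_rfl
  obtain ⟨C, hC⟩ := (isCompact_Icc (a := (0:ℝ)) (b := 1)).exists_bound_of_continuousOn hcd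
  have hbdd : BddAbove (Set.range fun x : s => derivWithin (g^[n]) s (x : ℝ)) := by
    refine ⟨C, ?_⟩
    rintro _ ⟨x, rfl⟩
    exact (le_abs_self _).trans (by simpa [Real.norm_eq_abs] using hC x x.2)
  have hsup : derivWithin (g^[n]) s c ≤
      ⨆ x : s, derivWithin (g^[n]) s (x : ℝ) := le_ciSup hbdd ⟨c, hcs⟩
  exact hkey.trans (hsup.trans (le_max_right _ _))
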